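/- Communication energy E(B) = p·z / (B·log₂(1 + h·p/(B·N₀))) is strictly decreasing and convex in the bandwidth B on (0, ∞), for constants p, z, h, N₀ > 0. -/

import Mathlib

open Real Set

section aux

variable {c : ℝ}

private lemma upos (hc : 0 < c) {B : ℝ} (hB : 0 < B) : (0:ℝ) < 1 + c / B := by
  have : 0 < c / B := div_pos hc hB
  linarith

private lemma fpos (hc : 0 < c) {B : ℝ} (hB : 0 < B) :
    0 < B * Real.log (1 + c / B) := by
  have h1 : (1:ℝ) < 1 + c / B := by
    have : 0 < c / B := div_pos hc hB
    linarith
  exact mul_pos hB (Real.log_pos h1)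

private lemma f_deriv (hc : 0 < c) {B : ℝ} (hB : 0 < B) :
    HasDerivAt (fun x : ℝ => x * Real.log (1 + c / x))
      (Real.log (1 + c / B) - c / (B + c)) B := by
  have hB0 : B ≠ 0 := ne_of_gt hB
  have hu : HasDerivAt (fun x : ℝ => 1 + c / x) (c * (-(B ^ 2)⁻¹)) B := by
    simpa [div_eq_mul_inv] using ((hasDerivAt_inv hB0).const_mul c).const_add 1
  have hupos := upos hc hB
  have hlog : HasDerivAt (fun x : ℝ => Real.log (1 + c / x))
      (c * (-(B ^ 2)⁻¹) / (1 + c / B)) B := hu.log (ne_of_gt hupos)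
  have hmul := (hasDerivAt_id B).mul hlog
  convert hmul using 1
  case e'_4 => rfl
  case e'_5 => rfl
  case e'_8 => rfl
  have hBc : B + c ≠ 0 := by positivity
  simp only [id]
  field_simp
  ring

private lemma f_deriv2 (hc : 0 < c) {B : ℝ} (hB : 0 < B) :
    HasDerivAt (fun x : ℝ => Real.log (1 + c / x) - c / (x + c))
      (-(c ^ 2 / (B * (B + c) ^ 2))) B := by
  have hB0 : B ≠ 0 := ne_of_gt hB
  have hu : HasDerivAt (fun x : ℝ => 1 + c / x) (c * (-(B ^ 2)⁻¹)) B := by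
    simpa [div_eq_mul_inv] using ((hasDerivAt_inv hB0).const_mul c).const_add 1
  have hupos := upos hc hB
  have hlog : HasDerivAt (fun x : ℝ => Real.log (1 + c / x))
      (c * (-(B ^ 2)⁻¹) / (1 + c / B)) B := hu.log (ne_of_gt hupos)
  have hBc : (0:ℝ) < B + c := by positivity
  have h2 : HasDerivAt (fun x : ℝ => c / (x + c))
      (c * (-1 / (B + c) ^ 2)) B := by
    simpa [div_eq_mul_inv] using
      (((hasDerivAt_id B).add_const c).inv (ne_of_gt hBc)).const_mul c
  have := hlog.sub h2
  convert this using 1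
  case e'_4 => rfl
  case e'_5 => rfl
  case e'_8 => rfl
  field_simp
  ring

private lemma f'_pos (hc : 0 < c) {B : ℝ} (hB : 0 < B) :
    0 < Real.log (1 + c / B) - c / (B + c) := by
  have hupos := upos hc hB
  have h1 : (1:ℝ) < 1 + c / B := by
    have : 0 < c / B := div_pos hc hB
    linarith
  have hne : (1 + c / B)⁻¹ ≠ 1 := by
    have : (1 + c / B)⁻¹ < 1 := inv_lt_one_of_one_lt₀ h1
    linarith
  have hlt : Real.log (1 + c / B)⁻¹ < (1 + c / B)⁻¹ - 1 :=
    Real.log_lt_sub_one_of_pos (inv_pos.mpr hupos) hne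
  rw [Real.log_inv] at hlt
  have hkey : 1 - (1 + c / B)⁻¹ = c / (B + c) := by
    have hB0 : B ≠ 0 := ne_of_gt hB
    have hBc : B + c ≠ 0 := by positivity
    field_simp
    ring
  linarith

end aux

/-- The communication energy E(B) = p·z/(B·log₂(1 + hp/(B·N₀))) is strictly decreasing
and convex in B on (0, ∞). -/
theorem comm_energy_anti_convex
    (p z h N₀ : ℝ) (hp : 0 < p) (hz : 0 < z) (hh : 0 < h) (hN₀ : 0 < N₀) :
    StrictAntiOn (fun B : ℝ => p * z / (B * Real.logb 2 (1 + h * p / (B * N₀)))) (Set.Ioi 0) ∧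
    ConvexOn ℝ (Set.Ioi 0) (fun B : ℝ => p * z / (B * Real.logb 2 (1 + h * p / (B * N₀)))) := by
  set c : ℝ := h * p / N₀ with hc_def
  have hc : 0 < c := by positivity
  set K : ℝ := p * z * Real.log 2 with hK_def
  have hlog2 : (0:ℝ) < Real.log 2 := Real.log_pos (by norm_num)
  have hK : 0 < K := by positivity
  set f : ℝ → ℝ := fun B => B * Real.log (1 + c / B) with hf_def
  -- pointwise identification
  have hEq : ∀ B ∈ Set.Ioi (0:ℝ),
      p * z / (B * Real.logb 2 (1 + h * p / (B * N₀))) = K / f B := by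
    intro B hB
    have hB : 0 < B := hB
    have harg : h * p / (B * N₀) = c / B := by
      rw [hc_def]; field_simp
    rw [harg, Real.logb, hf_def, hK_def]
    have hlogpos : 0 < Real.log (1 + c / B) := Real.log_pos (by
      have : 0 < c / B := div_pos hc hB; linarith)
    field_simp
  have hfpos : ∀ B ∈ Set.Ioi (0:ℝ), 0 < f B := fun B hB => fpos hc hB
  -- f is strictly monotone on Ioi 0
  have hcont : ContinuousOn f (Set.Ioi 0) := fun x hx =>
    (f_deriv hc hx).continuousAt.continuousWithinAt
  have hmono : StrictMonoOn f (Set.Ioi 0) := by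
    apply strictMonoOn_of_deriv_pos (convex_Ioi 0) hcont
    intro x hx
    rw [interior_Ioi] at hx
    rw [(f_deriv hc hx).deriv]
    exact f'_pos hc hx
  -- f is concave on Ioi 0
  have hconc : ConcaveOn ℝ (Set.Ioi 0) f := by
    apply concaveOn_of_hasDerivWithinAt2_nonpos (convex_Ioi 0) hcont
      (f' := fun x => Real.log (1 + c / x) - c / (x + c))
      (f'' := fun x => -(c ^ 2 / (x * (x + c) ^ 2)))
    · intro x hx
      rw [interior_Ioi] at hx
      exact (f_deriv hc hx).hasDerivWithinAt
    · intro x hx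
      rw [interior_Ioi] at hx
      exact (f_deriv2 hc hx).hasDerivWithinAt
    · intro x hx
      rw [interior_Ioi] at hx
      have hx : 0 < x := hx
      have : 0 < c ^ 2 / (x * (x + c) ^ 2) := by positivity
      linarith
  constructor
  · -- strict antitonicity
    intro a ha b hb hab
    show p * z / (b * Real.logb 2 (1 + h * p / (b * N₀)))
        < p * z / (a * Real.logb 2 (1 + h * p / (a * N₀)))
    rw [hEq a ha, hEq b hb]
    exact div_lt_div_of_pos_left hK (hfpos a ha) (hmono ha hb hab)
  · -- convexity
    refine ⟨convex_Ioi 0, fun x hx y hy a b ha hb hab => ?_⟩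
    have hxy : a • x + b • y ∈ Set.Ioi (0:ℝ) := (convex_Ioi 0) hx hy ha hb hab
    show p * z / ((a • x + b • y) * Real.logb 2 (1 + h * p / ((a • x + b • y) * N₀)))
        ≤ a • (p * z / (x * Real.logb 2 (1 + h * p / (x * N₀))))
          + b • (p * z / (y * Real.logb 2 (1 + h * p / (y * N₀))))
    rw [hEq _ hxy, hEq x hx, hEq y hy]
    have hfx := hfpos x hx
    have hfy := hfpos y hy
    have hcombo : 0 < a * f x + b * f y := by
      rcases eq_or_lt_of_le ha with ha0 | ha0
      · have hb1 : b = 1 := by linarith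
        simpa [← ha0, hb1] using hfy
      · have h1 : 0 < a * f x := mul_pos ha0 hfx
        have h2 : 0 ≤ b * f y := mul_nonneg hb hfy.le
        linarith
    have hstep1 : K / f (a • x + b • y) ≤ K / (a * f x + b * f y) := by
      have hge : a * f x + b * f y ≤ f (a • x + b • y) := by
        have := hconc.2 hx hy ha hb hab
        simpa [smul_eq_mul] using this
      exact div_le_div_of_nonneg_left hK.le hcombo hge
    have hstep2 : K / (a * f x + b * f y) ≤ a * (K / f x) + b * (K / f y) := by
      have hinv : ConvexOn ℝ (Set.Ioi 0) (fun t : ℝ => K • t ^ (-1 : ℤ)) :=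
        (convexOn_zpow (-1 : ℤ)).smul hK.le
      have := hinv.2 hfx hfy ha hb hab
      simpa [smul_eq_mul, zpow_neg, zpow_one, div_eq_mul_inv, mul_comm, mul_left_comm,
        mul_assoc] using this
    calc K / f (a • x + b • y) ≤ K / (a * f x + b * f y) := hstep1
      _ ≤ a * (K / f x) + b * (K / f y) := hstep2
      _ = a • (K / f x) + b • (K / f y) := by simp [smul_eq_mul]
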